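/- Assume S_F ≠ ∅. Then for every point z = (ϑ, x) ∈ Σ_k × M such that the forward orbit {σ^n(ϑ) : n ≥ 0} is dense in Σ_k, the closure of graph ρ is contained in the ω-limit set ω_F(z), i.e., every point of the closure of graph ρ is a limit of a subsequence F^{n_j}(z) with n_j → ∞. -/

import Mathlib

open Set Function Filter Topology

noncomputable section

/-- The shift map on two-sided sequences. -/
def shiftMap {k : ℕ} (θ : ℤ → Fin k) : ℤ → Fin k := fun i => θ (i + 1)

/-- The step skew product `F(θ, x) = (σ θ, f_{θ₀} x)`. -/
def skewProd {k : ℕ} {M : Type*} (f : Fin k → M → M) :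
    (ℤ → Fin k) × M → (ℤ → Fin k) × M :=
  fun p => (shiftMap p.1, f (p.1 0) p.2)

/-- Backward composition `f_{θ₋₁} ∘ ⋯ ∘ f_{θ₋ₙ}`. -/
def bcomp {k : ℕ} {M : Type*} (f : Fin k → M → M) (θ : ℤ → Fin k) : ℕ → M → M
  | 0 => id
  | n + 1 => bcomp f θ n ∘ f (θ (-((n : ℤ) + 1)))

/-- The spine `I_θ = ⋂_{n ≥ 1} f_{θ₋₁} ∘ ⋯ ∘ f_{θ₋ₙ}(M)`. -/
def spine {k : ℕ} {M : Type*} (f : Fin k → M → M) (θ : ℤ → Fin k) : Set M :=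
  ⋂ n : ℕ, bcomp f θ (n + 1) '' Set.univ

/-- The set of weakly hyperbolic sequences: those `θ` whose spine is a singleton. -/
def weakHyp {k : ℕ} {M : Type*} (f : Fin k → M → M) : Set (ℤ → Fin k) :=
  {θ | ∃ x : M, spine f θ = {x}}

/-- The ω-limit set of a point `z` under iteration of `F`: limits of subsequences
`F^{n_j}(z)` with `n_j → ∞`. -/
def omegaLim {α : Type*} [TopologicalSpace α] (F : α → α) (z : α) : Set α :=
  {w | ∃ φ : ℕ → ℕ, StrictMono φ ∧ Tendsto (fun j => F^[φ j] z) atTop (𝓝 w)}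

lemma shiftMap_iterate {k : ℕ} (θ : ℤ → Fin k) (n : ℕ) (i : ℤ) :
    shiftMap^[n] θ i = θ (i + n) := by
  induction n generalizing θ i with
  | zero => simp
  | succ n ih =>
    rw [Function.iterate_succ_apply, ih]
    show θ (i + n + 1) = θ (i + (n + 1 : ℕ))
    congr 1
    push_cast
    ring

lemma bcomp_succ_outer {k : ℕ} {M : Type*} (f : Fin k → M → M) (ψ : ℤ → Fin k) (n : ℕ) :
    bcomp f ψ (n + 1) = f (ψ (-1)) ∘ bcomp f (fun i => ψ (i - 1)) n := by
  induction n with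
  | zero =>
    show bcomp f ψ 0 ∘ f (ψ (-(0 + 1))) = f (ψ (-1)) ∘ id
    norm_num [bcomp]
  | succ n ih =>
    show bcomp f ψ (n + 1) ∘ f (ψ (-((n : ℤ) + 1 + 1))) = _
    rw [ih]
    have h : bcomp f (fun i => ψ (i - 1)) (n + 1)
        = bcomp f (fun i => ψ (i - 1)) n ∘ f (ψ (-((n : ℤ) + 1) - 1)) := rfl
    have h2 : (-((n : ℤ) + 1 + 1)) = -((n : ℤ) + 1) - 1 := by ring
    rw [h, h2, Function.comp_assoc]

lemma bcomp_continuous {k : ℕ} {M : Type*} [TopologicalSpace M] {f : Fin k → M → M}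
    (hf : ∀ i, Continuous (f i)) (ψ : ℤ → Fin k) (n : ℕ) : Continuous (bcomp f ψ n) := by
  induction n with
  | zero => exact continuous_id
  | succ n ih => exact ih.comp (hf _)

lemma bcomp_image_antitone {k : ℕ} {M : Type*} (f : Fin k → M → M) (ψ : ℤ → Fin k) :
    Antitone (fun n => bcomp f ψ n '' (Set.univ : Set M)) := by
  apply antitone_nat_of_succ_le
  intro n
  rintro _ ⟨y, -, rfl⟩
  exact ⟨f (ψ (-((n : ℤ) + 1))) y, trivial, rfl⟩

lemma bcomp_congr {k : ℕ} {M : Type*} (f : Fin k → M → M) {ψ ψ' : ℤ → Fin k} (n : ℕ)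
    (h : ∀ j : ℕ, 1 ≤ j → j ≤ n → ψ (-(j : ℤ)) = ψ' (-(j : ℤ))) :
    bcomp f ψ n = bcomp f ψ' n := by
  induction n with
  | zero => rfl
  | succ n ih =>
    show bcomp f ψ n ∘ f (ψ (-((n : ℤ) + 1))) = bcomp f ψ' n ∘ f (ψ' (-((n : ℤ) + 1)))
    have h1 : ψ (-((n : ℤ) + 1)) = ψ' (-((n : ℤ) + 1)) := by
      have := h (n + 1) (Nat.le_add_left 1 n) le_rfl
      simpa using this
    rw [ih fun j hj1 hj2 => h j hj1 (hj2.trans (Nat.le_succ n)), h1]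

lemma skewProd_iterate {k : ℕ} {M : Type*} (f : Fin k → M → M) (θ : ℤ → Fin k) (x : M)
    (n : ℕ) :
    (skewProd f)^[n] (θ, x) = (shiftMap^[n] θ, bcomp f (shiftMap^[n] θ) n x) := by
  induction n with
  | zero => simp [bcomp]
  | succ n ih =>
    rw [Function.iterate_succ_apply', ih]
    show (shiftMap (shiftMap^[n] θ), f (shiftMap^[n] θ 0) (bcomp f (shiftMap^[n] θ) n x)) = _
    have h1 : shiftMap^[n + 1] θ = shiftMap (shiftMap^[n] θ) := Function.iterate_succ_apply' ..
    have h2 : (fun i => shiftMap^[n + 1] θ (i - 1)) = shiftMap^[n] θ := by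
      funext i
      rw [shiftMap_iterate, shiftMap_iterate]
      congr 1
      push_cast
      ring
    have h3 : shiftMap^[n + 1] θ (-1) = shiftMap^[n] θ 0 := by
      rw [shiftMap_iterate, shiftMap_iterate]
      congr 1
      push_cast
      ring
    rw [bcomp_succ_outer, h3, h2, ← h1]
    rfl

/-- The shift as a homeomorphism. -/
def shiftHomeo (k : ℕ) : (ℤ → Fin k) ≃ₜ (ℤ → Fin k) where
  toFun := shiftMap
  invFun := fun θ i => θ (i - 1)
  left_inv := fun θ => funext fun i => by simp [shiftMap]
  right_inv := fun θ => funext fun i => by simp [shiftMap]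
  continuous_toFun := continuous_pi fun i => continuous_apply (i + 1)
  continuous_invFun := continuous_pi fun i => continuous_apply (i - 1)

lemma dense_image_homeo {X Y : Type*} [TopologicalSpace X] [TopologicalSpace Y] (e : X ≃ₜ Y)
    {s : Set X} (hs : Dense s) : Dense (e '' s) := by
  rw [dense_iff_closure_eq] at hs ⊢
  rw [← e.image_closure, hs, Set.image_univ, e.surjective.range_eq]

lemma tail_dense {k : ℕ} {θ : ℤ → Fin k}
    (hdense : Dense (Set.range fun n : ℕ => shiftMap^[n] θ)) (N : ℕ) :
    Dense (Set.range fun n : ℕ => shiftMap^[n + N] θ) := by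
  induction N with
  | zero => simpa using hdense
  | succ N ih =>
    have heq : (Set.range fun n : ℕ => shiftMap^[n + (N + 1)] θ)
        = shiftHomeo k '' (Set.range fun n : ℕ => shiftMap^[n + N] θ) := by
      have hfun : (fun n : ℕ => shiftMap^[n + (N + 1)] θ)
          = ⇑(shiftHomeo k) ∘ (fun n : ℕ => shiftMap^[n + N] θ) := by
        funext n
        show shiftMap^[n + (N + 1)] θ = shiftMap (shiftMap^[n + N] θ)
        rw [← Function.iterate_succ_apply' shiftMap (n + N)]
        congr 1
      rw [hfun, Set.range_comp]
    rw [heq]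
    exact dense_image_homeo _ ih

/-- If `S_F ≠ ∅`, then for every point `z = (θ, x)` whose base forward orbit is dense,
the closure of the graph of the coding map is contained in the ω-limit set of `z`. -/
theorem closure_graph_subset_omegaLimit
    {k : ℕ} (hk : 1 ≤ k) {M : Type*} [MetricSpace M] [CompactSpace M] [Nonempty M]
    (f : Fin k → M → M) (hf : ∀ i, Continuous (f i))
    (hS : (weakHyp f).Nonempty)
    (ρ : (ℤ → Fin k) → M) (hρ : ∀ θ ∈ weakHyp f, spine f θ = {ρ θ})
    (θ : ℤ → Fin k) (x : M)
    (hdense : Dense (Set.range fun n : ℕ => shiftMap^[n] θ)) :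
    closure ((fun ϑ => (ϑ, ρ ϑ)) '' weakHyp f) ⊆ omegaLim (skewProd f) (θ, x) := by
  intro w hw
  have key : ∀ s ∈ 𝓝 w, ∃ᶠ n in atTop, (fun n => (skewProd f)^[n] (θ, x)) n ∈ s := by
    intro s hs
    rw [Filter.frequently_atTop]
    intro N
    obtain ⟨t, hts, hto, hwt⟩ := mem_nhds_iff.mp hs
    obtain ⟨p, hpt, hpg⟩ := mem_closure_iff.mp hw t hto hwt
    obtain ⟨ϑ, hϑ, rfl⟩ := hpg
    have ht : t ∈ 𝓝 (ϑ, ρ ϑ) := hto.mem_nhds hpt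
    rw [mem_nhds_prod_iff] at ht
    obtain ⟨U, hU, V, hV, hUV⟩ := ht
    -- Step A: some backward image is inside V
    have hcpt : ∀ n : ℕ, IsCompact (bcomp f ϑ (n + 1) '' Set.univ) :=
      fun n => isCompact_univ.image (bcomp_continuous hf ϑ (n + 1))
    have hant : Antitone (fun n : ℕ => bcomp f ϑ (n + 1) '' (Set.univ : Set M)) :=
      fun a b hab => bcomp_image_antitone f ϑ (Nat.succ_le_succ hab)
    have hdir : Directed (· ⊇ ·) (fun n : ℕ => bcomp f ϑ (n + 1) '' (Set.univ : Set M)) :=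
      hant.directed_ge
    obtain ⟨m, hm⟩ := exists_subset_nhds_of_isCompact hdir hcpt (U := V)
      (fun y hy => by
        have hy' : y ∈ spine f ϑ := hy
        rw [hρ ϑ hϑ, Set.mem_singleton_iff] at hy'
        subst hy'
        exact hV)
    -- Step B: cylinder neighborhood inside U
    rw [nhds_pi, Filter.mem_pi] at hU
    obtain ⟨I, hIfin, t', ht', hpi⟩ := hU
    set J : Set ℤ := I ∪ ((fun j : ℕ => -(j : ℤ)) '' Set.Icc 1 (m + 1)) with hJ
    have hJfin : J.Finite := hIfin.union ((Set.finite_Icc 1 (m + 1)).image _)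
    set W : Set (ℤ → Fin k) := {φ | ∀ i ∈ J, φ i = ϑ i} with hWdef
    have hWopen : IsOpen W := by
      have hWeq : W = ⋂ i ∈ J, (fun φ : ℤ → Fin k => φ i) ⁻¹' {ϑ i} := by
        ext φ
        simp [hWdef]
      rw [hWeq]
      exact hJfin.isOpen_biInter fun i _ =>
        (continuous_apply i).isOpen_preimage _ (isOpen_discrete _)
    have hϑW : ϑ ∈ W := fun i _ => rfl
    -- density of the tail orbit
    set N0 : ℕ := max N (m + 1) with hN0
    obtain ⟨y, hyr, hyW⟩ := (tail_dense hdense N0).exists_mem_open hWopen ⟨ϑ, hϑW⟩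
    obtain ⟨n, rfl⟩ := hyr
    have hyW' : ∀ i ∈ J, shiftMap^[n + N0] θ i = ϑ i := hyW
    refine ⟨n + N0, le_trans (le_max_left N (m + 1)) (Nat.le_add_left N0 n), ?_⟩
    apply hts
    apply hUV
    show (skewProd f)^[n + N0] (θ, x) ∈ U ×ˢ V
    rw [skewProd_iterate]
    set ψ : ℤ → Fin k := shiftMap^[n + N0] θ with hψdef
    refine Set.mem_prod.mpr ⟨?_, ?_⟩
    · apply hpi
      intro i hi
      show ψ i ∈ t' i
      rw [hyW' i (Or.inl hi)]
      exact mem_of_mem_nhds (ht' i)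
    · have hmem : bcomp f ψ (n + N0) x ∈ bcomp f ψ (n + N0) '' Set.univ :=
        ⟨x, trivial, rfl⟩
      have hsub1 : bcomp f ψ (n + N0) '' Set.univ ⊆ bcomp f ψ (m + 1) '' Set.univ :=
        bcomp_image_antitone f ψ
          (le_trans (le_max_right N (m + 1)) (Nat.le_add_left N0 n))
      have hcongr : bcomp f ψ (m + 1) = bcomp f ϑ (m + 1) :=
        bcomp_congr f (m + 1) (fun j hj1 hj2 => hyW' _ (Or.inr ⟨j, ⟨hj1, hj2⟩, rfl⟩))
      exact hm (hcongr ▸ hsub1 hmem)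
  have hcl : MapClusterPt w atTop (fun n => (skewProd f)^[n] (θ, x)) :=
    mapClusterPt_iff_frequently.mpr key
  obtain ⟨φ, hφ, hlim⟩ := TopologicalSpace.FirstCountableTopology.tendsto_subseq hcl
  exact ⟨φ, hφ, hlim⟩
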